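/- arXiv:1308.2979 — 2 statements merged into one kernel-verified Lean document; each statement's English description precedes it below -/
import Mathlib

section
/- In the barrier-free POabcast algorithm, a process delivers each broadcast value in at most one consensus instance, even though the primary may re-propose the same value in multiple instances: if a primary resends a value only when that value was not delivered at the instance where it was previously proposed, then each value is delivered at most once. -/
/-- A value is delivered in at most one consensus instance, even if re-proposed:
delivery only happens at instances where v's proposal is outstanding, and the
primary re-proposes v at a later instance only if the earlier instance did not
result in delivery of v. -/
theorem stmt5
    (proposedAt : ℕ → Prop)   -- instances in which v is (re-)proposed by the primary
    (delAt : ℕ → Prop)        -- instances at which the process delivers v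
    (hDelProp : ∀ n, delAt n → proposedAt n)
    (hResend : ∀ n n', proposedAt n → proposedAt n' → n < n' → ¬ delAt n) :
    ∀ n n', delAt n → delAt n' → n = n' := by
  intro n n' hn hn'
  rcases lt_trichotomy n n' with h|h|h
  · exact absurd hn (hResend n n' (hDelProp n hn) (hDelProp n' hn') h)
  · exact h
  · exact absurd hn' (hResend n' n (hDelProp n' hn') (hDelProp n hn) h)
end

section
/- Linearizability mapping lemma (abstracted from Theorem 4): suppose all processes deliver state updates in a common total order ≺_Δ, each delivered update δ at position i satisfies (i) no update at a position < i was generated from the same operation, and (ii) src(δ) equals the state reached by applying the updates at positions < i starting from the common initial state Σ₀. Then the map from delivered updates to operations is injective, the fold of the delivered sequence from Σ₀ never reaches ⊥, and every prefix of the delivered sequence yields a state reachable by executing the corresponding operation sequence. -/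
structure Upd (S : Type) where
  src : S
  tgt : S

def applyU {S : Type} [DecidableEq S] (δ : Upd S) : Option S → Option S
  | none => none
  | some x => if x = δ.src then some δ.tgt else none

def foldApply {S : Type} [DecidableEq S] (l : List (Upd S)) (S0 : S) : Option S :=
  l.foldl (fun s δ => applyU δ s) (some S0)

/-- Linearizability mapping lemma: given a common delivery order of updates δ₀, δ₁, …
with (i) distinct generating operations and (ii) each update generated from the state
reached by the preceding prefix, the map to operations is injective, every prefix
fold from S0 avoids ⊥ and yields the target of the last update, and every prefix
corresponds to a legal sequential execution S0 —op₀→ … —op_{n-1}→. -/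
theorem stmt16
    (S O : Type) [DecidableEq S]
    (exec : S → O → Upd S → Prop)        -- execution relation S —op→ δ
    (S0 : S)
    (δ : ℕ → Upd S) (opOf : ℕ → O)
    (stateAfter : ℕ → S)
    (hSA0 : stateAfter 0 = S0)
    (hSAs : ∀ k, stateAfter (k + 1) = (δ k).tgt)
    (hOps : ∀ i j, i ≠ j → opOf i ≠ opOf j)        -- (i)
    (hSrc : ∀ k, (δ k).src = stateAfter k)          -- (ii)
    (hExec : ∀ k, exec ((δ k).src) (opOf k) (δ k))  -- δ_k generated by executing op_k
    : Function.Injective opOf ∧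
      (∀ n, foldApply ((List.range n).map δ) S0 = some (stateAfter n)) ∧
      (∀ n, ∃ run : ℕ → S, run 0 = S0 ∧
        ∀ k < n, exec (run k) (opOf k) (δ k) ∧ run (k + 1) = (δ k).tgt) := by
  refine ⟨fun i j h => by_contra fun hne => hOps i j hne h, ?_, ?_⟩
  · intro n
    induction n with
    | zero => simpa [foldApply] using hSA0.symm
    | succ n ih =>
      rw [List.range_succ, List.map_append]
      simp only [foldApply, List.foldl_append] at *
      rw [ih]
      simp [applyU, hSrc n, hSAs n]
  · intro n
    exact ⟨stateAfter, hSA0, fun k _ => ⟨by rw [← hSrc k]; exact hExec k, hSAs k⟩⟩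
end
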